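/- Let B be a unital complex star algebra (a unital ℂ-algebra with a star-ring structure compatible with the ℂ-action), let m ≥ 1, and let A be an invertible m × m complex matrix. Write ι : ℂ → B for the algebra map, Ā for the entrywise complex conjugate of A, and for a matrix M over B write Mᴴ for its conjugate transpose (transpose composed with the star of B). Suppose V is an m × m matrix over B with V·Vᴴ = Vᴴ·V = 1, d ∈ B satisfies d·d* = d*·d = 1, and V·(A.map ι)·Vᵗ = d • (A.map ι). Then V commutes with the matrix (|AĀ|).map ι, where |AĀ| denotes the positive semidefinite square root of the complex matrix (AĀ)ᴴ·(AĀ). -/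

import Mathlib

open Matrix ComplexOrder

/-- The square root of a positive semidefinite matrix, as defined in the older Mathlib
(`Matrix.PosSemidef.sqrt`, since removed). -/
noncomputable def Matrix.PosSemidef.sqrt {n 𝕜 : Type*} [Fintype n] [RCLike 𝕜] [DecidableEq n]
    {A : Matrix n n 𝕜} (hA : A.PosSemidef) : Matrix n n 𝕜 :=
  hA.1.eigenvectorUnitary.1 * diagonal ((↑) ∘ (√·) ∘ hA.1.eigenvalues) *
  (star hA.1.eigenvectorUnitary : Matrix n n 𝕜)

section PolyAux

open Polynomial

variable {n : Type*} [Fintype n] [DecidableEq n]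

lemma aux_pow_conj (U X : Matrix n n ℂ) (hU : U * Uᴴ = 1) (hU' : Uᴴ * U = 1) (k : ℕ) :
    (U * X * Uᴴ) ^ k = U * X ^ k * Uᴴ := by
  induction k with
  | zero => simp [hU]
  | succ k ih =>
      rw [pow_succ, ih, pow_succ]
      calc U * X ^ k * Uᴴ * (U * X * Uᴴ)
          = U * X ^ k * ((Uᴴ * U) * (X * Uᴴ)) := by simp only [mul_assoc]
        _ = U * (X ^ k * X) * Uᴴ := by rw [hU']; simp only [one_mul, mul_assoc]

lemma aux_aeval_conj (U X : Matrix n n ℂ) (hU : U * Uᴴ = 1) (hU' : Uᴴ * U = 1) (q : ℂ[X]) :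
    Polynomial.aeval (U * X * Uᴴ) q = U * (Polynomial.aeval X q) * Uᴴ := by
  induction q using Polynomial.induction_on' with
  | add p r hp hr => simp [hp, hr, Matrix.mul_add, Matrix.add_mul]
  | monomial k c =>
      rw [aeval_monomial, aeval_monomial, aux_pow_conj U X hU hU' k]
      rw [show (algebraMap ℂ (Matrix n n ℂ)) c * (U * X ^ k * Uᴴ)
            = ((algebraMap ℂ (Matrix n n ℂ)) c * U) * X ^ k * Uᴴ by
          simp only [mul_assoc], (Algebra.commute_algebraMap_left c U).eq]
      simp only [mul_assoc]

lemma aux_aeval_diagonal (f : n → ℂ) (q : ℂ[X]) :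
    Polynomial.aeval (Matrix.diagonal f) q = Matrix.diagonal (fun i => Polynomial.eval (f i) q) := by
  induction q using Polynomial.induction_on' with
  | add p r hp hr =>
      simp [hp, hr, Matrix.diagonal_add]
  | monomial k c =>
      simp [aeval_monomial, Matrix.diagonal_pow, Matrix.algebraMap_eq_diagonal,
        Matrix.diagonal_mul_diagonal, Pi.algebraMap_def]

/-- The positive semidefinite square root is a polynomial in the matrix. -/
lemma exists_aeval_eq_sqrt {H : Matrix n n ℂ} (hH : H.PosSemidef) :
    ∃ q : ℂ[X], Polynomial.aeval H q = hH.sqrt := by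
  classical
  set U : Matrix n n ℂ := hH.1.eigenvectorUnitary.1 with hUdef
  have hU : U * Uᴴ = 1 := by
    simpa [star_eq_conjTranspose] using hH.1.eigenvectorUnitary.2.2
  have hU' : Uᴴ * U = 1 := by
    simpa [star_eq_conjTranspose] using hH.1.eigenvectorUnitary.2.1
  set lam := hH.1.eigenvalues with hlam
  set s : Finset ℝ := Finset.univ.image lam with hs
  have hinj : Set.InjOn (fun t : ℝ => (t : ℂ)) ↑s :=
    Complex.ofReal_injective.injOn
  refine ⟨Lagrange.interpolate s (fun t : ℝ => (t : ℂ))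
      (fun t : ℝ => ((Real.sqrt t : ℝ) : ℂ)), ?_⟩
  have hspec : H = U * Matrix.diagonal (RCLike.ofReal ∘ lam) * Uᴴ := by
    simpa [star_eq_conjTranspose] using hH.1.spectral_theorem
  conv_lhs => rw [hspec]
  rw [aux_aeval_conj U _ hU hU', aux_aeval_diagonal]
  have hev : ∀ i : n, Polynomial.eval ((RCLike.ofReal ∘ lam) i)
        (Lagrange.interpolate s (fun t : ℝ => (t : ℂ)) (fun t : ℝ => ((Real.sqrt t : ℝ) : ℂ)))
      = (((↑) : ℝ → ℂ) ∘ Real.sqrt ∘ lam) i := by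
    intro i
    have hmem : lam i ∈ s := Finset.mem_image_of_mem _ (Finset.mem_univ i)
    have := Lagrange.eval_interpolate_at_node
      (r := fun t : ℝ => ((Real.sqrt t : ℝ) : ℂ)) hinj hmem
    simpa using this
  simp only [hev]
  rfl

end PolyAux

theorem stmt0 {B : Type*} [Ring B] [Algebra ℂ B] [StarRing B] [StarModule ℂ B]
    {m : ℕ} (hm : 1 ≤ m) (A : Matrix (Fin m) (Fin m) ℂ) (hA : IsUnit A)
    (V : Matrix (Fin m) (Fin m) B)
    (hV₁ : V * Vᴴ = 1) (hV₂ : Vᴴ * V = 1)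
    (d : B) (hd₁ : d * star d = 1) (hd₂ : star d * d = 1)
    (hrel : V * (A.map (algebraMap ℂ B)) * Vᵀ = d • (A.map (algebraMap ℂ B))) :
    V * ((Matrix.posSemidef_conjTranspose_mul_self
            (A * A.map (starRingEnd ℂ))).sqrt.map (algebraMap ℂ B))
      = ((Matrix.posSemidef_conjTranspose_mul_self
            (A * A.map (starRingEnd ℂ))).sqrt.map (algebraMap ℂ B)) * V := by
  classical
  have star_ι : ∀ z : ℂ, star (algebraMap ℂ B z) = algebraMap ℂ B (star z) := fun z =>
    (algebraMap_star_comm z).symm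
  have φ_mul : ∀ X Y : Matrix (Fin m) (Fin m) ℂ,
      (X * Y).map (algebraMap ℂ B) = X.map (algebraMap ℂ B) * Y.map (algebraMap ℂ B) :=
    fun X Y => Matrix.map_mul (f := algebraMap ℂ B)
  have φ_conjT : ∀ X : Matrix (Fin m) (Fin m) ℂ,
      (X.map (algebraMap ℂ B))ᴴ = Xᴴ.map (algebraMap ℂ B) := by
    intro X; ext i j
    simp [Matrix.conjTranspose_apply, star_ι]
  -- the scalar diagonal matrices
  set D : Matrix (Fin m) (Fin m) B := Matrix.diagonal (fun _ => d) with hD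
  set Ds : Matrix (Fin m) (Fin m) B := Matrix.diagonal (fun _ => star d) with hDs
  have hDconj : Dᴴ = Ds := by
    rw [hD, hDs, Matrix.diagonal_conjTranspose]
    rfl
  have hDDs : D * Ds = 1 := by
    rw [hD, hDs, Matrix.diagonal_mul_diagonal]
    simp [hd₁]
  have hDsD : Ds * D = 1 := by
    rw [hD, hDs, Matrix.diagonal_mul_diagonal]
    simp [hd₂]
  -- scalar matrices with entries in the image of ℂ commute with diagonal scalars
  have central : ∀ (c : Matrix (Fin m) (Fin m) ℂ) (b : B),
      c.map (algebraMap ℂ B) * Matrix.diagonal (fun _ => b)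
        = Matrix.diagonal (fun _ => b) * c.map (algebraMap ℂ B) := by
    intro c b; ext i j
    simp only [Matrix.mul_diagonal, Matrix.diagonal_mul, Matrix.map_apply]
    exact Algebra.commutes _ _
  -- entrywise conjugation lemmas
  have conj_conj : ∀ X : Matrix (Fin m) (Fin m) B, (Xᵀᴴ)ᵀᴴ = X := by
    intro X; ext i j
    simp [Matrix.conjTranspose_apply, Matrix.transpose_apply]
  have conj_philMul : ∀ (c : Matrix (Fin m) (Fin m) ℂ) (X : Matrix (Fin m) (Fin m) B),
      (c.map (algebraMap ℂ B) * X)ᵀᴴ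
        = (c.map (starRingEnd ℂ)).map (algebraMap ℂ B) * Xᵀᴴ := by
    intro c X; ext i j
    simp only [Matrix.conjTranspose_apply, Matrix.transpose_apply, Matrix.mul_apply,
      Matrix.map_apply, star_sum]
    refine Finset.sum_congr rfl fun k _ => ?_
    rw [StarMul.star_mul, star_ι, ← starRingEnd_apply]
    exact (Algebra.commutes _ _).symm
  have conj_phirMul : ∀ (c : Matrix (Fin m) (Fin m) ℂ) (X : Matrix (Fin m) (Fin m) B),
      (X * c.map (algebraMap ℂ B))ᵀᴴ
        = Xᵀᴴ * (c.map (starRingEnd ℂ)).map (algebraMap ℂ B) := by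
    intro c X; ext i j
    simp only [Matrix.conjTranspose_apply, Matrix.transpose_apply, Matrix.mul_apply,
      Matrix.map_apply, star_sum]
    refine Finset.sum_congr rfl fun k _ => ?_
    rw [StarMul.star_mul, star_ι, ← starRingEnd_apply]
    exact Algebra.commutes _ _
  have conj_DsMul : ∀ X : Matrix (Fin m) (Fin m) B, (Ds * X)ᵀᴴ = Xᵀᴴ * D := by
    intro X; ext i j
    simp [hD, hDs, Matrix.conjTranspose_apply, Matrix.transpose_apply,
      Matrix.diagonal_mul, Matrix.mul_diagonal]
  clear_value D Ds
  -- step 1 : the relation with D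
  have h1 : V * A.map (algebraMap ℂ B) * Vᵀ = D * A.map (algebraMap ℂ B) := by
    rw [hrel]
    ext i j
    simp [hD, Matrix.diagonal_mul, Matrix.map_apply]
  -- step 2 : conjugate transpose of h1
  have h2 : Vᵀᴴ * Aᴴ.map (algebraMap ℂ B) * Vᴴ = Aᴴ.map (algebraMap ℂ B) * Ds := by
    have := congrArg Matrix.conjTranspose h1
    rw [Matrix.conjTranspose_mul, Matrix.conjTranspose_mul, Matrix.conjTranspose_mul,
      hDconj, φ_conjT] at this
    rw [← mul_assoc] at this
    exact this
  -- step 3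
  have h3 : Vᵀᴴ * Aᴴ.map (algebraMap ℂ B)
      = Aᴴ.map (algebraMap ℂ B) * (Ds * V) := by
    have h2' : Vᵀᴴ * Aᴴ.map (algebraMap ℂ B) * Vᴴ * V
        = Aᴴ.map (algebraMap ℂ B) * Ds * V := by rw [h2]
    rw [mul_assoc (Vᵀᴴ * Aᴴ.map (algebraMap ℂ B)), hV₂, mul_one] at h2'
    rw [h2', mul_assoc]
  -- step 4 : entrywise conjugation of h3
  have hAt : (Aᴴ).map (starRingEnd ℂ) = Aᵀ := by
    ext i j
    simp [Matrix.conjTranspose_apply]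
  have h4 : V * Aᵀ.map (algebraMap ℂ B)
      = Aᵀ.map (algebraMap ℂ B) * (Vᵀᴴ * D) := by
    have := congrArg (fun X : Matrix (Fin m) (Fin m) B => Xᵀᴴ) h3
    rw [conj_phirMul, conj_philMul, conj_conj, conj_DsMul, hAt] at this
    exact this
  -- the key matrices
  set M : Matrix (Fin m) (Fin m) B :=
    Aᵀ.map (algebraMap ℂ B) * Aᴴ.map (algebraMap ℂ B) with hM
  set W : Matrix (Fin m) (Fin m) B := Ds * (V * D) with hW
  clear_value M W
  -- step 5
  have hDaH : D * Aᴴ.map (algebraMap ℂ B) = Aᴴ.map (algebraMap ℂ B) * D := by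
    rw [hD]
    exact (central Aᴴ d).symm
  have h5 : V * M = M * W := by
    rw [hM, hW]
    calc V * (Aᵀ.map (algebraMap ℂ B) * Aᴴ.map (algebraMap ℂ B))
        = (V * Aᵀ.map (algebraMap ℂ B)) * Aᴴ.map (algebraMap ℂ B) := by
          rw [mul_assoc]
      _ = (Aᵀ.map (algebraMap ℂ B) * (Vᵀᴴ * D)) * Aᴴ.map (algebraMap ℂ B) := by
          rw [h4]
      _ = Aᵀ.map (algebraMap ℂ B) * (Vᵀᴴ * (D * Aᴴ.map (algebraMap ℂ B))) := by
          simp only [mul_assoc]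
      _ = Aᵀ.map (algebraMap ℂ B) * (Vᵀᴴ * (Aᴴ.map (algebraMap ℂ B) * D)) := by
          rw [hDaH]
      _ = Aᵀ.map (algebraMap ℂ B) * ((Vᵀᴴ * Aᴴ.map (algebraMap ℂ B)) * D) := by
          simp only [mul_assoc]
      _ = Aᵀ.map (algebraMap ℂ B) * ((Aᴴ.map (algebraMap ℂ B) * (Ds * V)) * D) := by
          rw [h3]
      _ = Aᵀ.map (algebraMap ℂ B) * Aᴴ.map (algebraMap ℂ B) * (Ds * (V * D)) := by
          simp only [mul_assoc]
  -- W is unitary (one side suffices)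
  have hWconj : Wᴴ = Ds * (Vᴴ * D) := by
    rw [hW, Matrix.conjTranspose_mul, Matrix.conjTranspose_mul, hDconj]
    have hDsc : Dsᴴ = D := by
      rw [hD, hDs, Matrix.diagonal_conjTranspose]
      simp
    rw [hDsc]
    simp only [mul_assoc]
  have hWW : W * Wᴴ = 1 := by
    rw [hWconj, hW]
    calc Ds * (V * D) * (Ds * (Vᴴ * D))
        = Ds * (V * (D * Ds) * (Vᴴ * D)) := by simp only [mul_assoc]
      _ = Ds * (V * (Vᴴ * D)) := by rw [hDDs, mul_one]
      _ = Ds * ((V * Vᴴ) * D) := by simp only [mul_assoc]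
      _ = Ds * D := by rw [hV₁, one_mul]
      _ = 1 := hDsD
  -- step 7
  have h7 : W * Mᴴ = Mᴴ * V := by
    have h6 : Mᴴ * Vᴴ = Wᴴ * Mᴴ := by
      have := congrArg Matrix.conjTranspose h5
      rwa [Matrix.conjTranspose_mul, Matrix.conjTranspose_mul] at this
    calc W * Mᴴ = W * (Mᴴ * (Vᴴ * V)) := by rw [hV₂, mul_one]
      _ = W * ((Mᴴ * Vᴴ) * V) := by simp only [mul_assoc]
      _ = W * ((Wᴴ * Mᴴ) * V) := by rw [h6]
      _ = (W * Wᴴ) * (Mᴴ * V) := by simp only [mul_assoc]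
      _ = Mᴴ * V := by rw [hWW, one_mul]
  -- step 8 : V commutes with M * Mᴴ
  have h8 : V * (M * Mᴴ) = (M * Mᴴ) * V := by
    calc V * (M * Mᴴ) = (V * M) * Mᴴ := by rw [mul_assoc]
      _ = (M * W) * Mᴴ := by rw [h5]
      _ = M * (W * Mᴴ) := by rw [mul_assoc]
      _ = M * (Mᴴ * V) := by rw [h7]
      _ = (M * Mᴴ) * V := by rw [mul_assoc]
  -- identify M * Mᴴ with the image of N
  have hMMH : M * Mᴴ
      = (((A * A.map (starRingEnd ℂ))ᴴ * (A * A.map (starRingEnd ℂ)))).map (algebraMap ℂ B) := by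
    have hconjAb : (A.map (starRingEnd ℂ))ᴴ = Aᵀ := by
      ext i j
      simp [Matrix.conjTranspose_apply]
    have hAtH : (Aᵀ)ᴴ = A.map (starRingEnd ℂ) := by
      ext i j
      simp [Matrix.conjTranspose_apply]
    have hMH : Mᴴ = (A * A.map (starRingEnd ℂ)).map (algebraMap ℂ B) := by
      rw [hM, Matrix.conjTranspose_mul, φ_conjT, φ_conjT, ← φ_mul,
        Matrix.conjTranspose_conjTranspose, hAtH]
    have hMc : M = ((A * A.map (starRingEnd ℂ))ᴴ).map (algebraMap ℂ B) := by
      rw [hM, ← φ_mul, Matrix.conjTranspose_mul, hconjAb]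
    rw [hMH, hMc, ← φ_mul]
  rw [hMMH] at h8
  -- transfer commutation through the square root via a polynomial
  have hcomm : ∀ p : Polynomial ℂ, Commute V (Polynomial.aeval
      ((((A * A.map (starRingEnd ℂ))ᴴ * (A * A.map (starRingEnd ℂ)))).map (algebraMap ℂ B))
      p) := by
    intro p
    induction p using Polynomial.induction_on' with
    | add p r hp hr => simpa [map_add] using hp.add_right hr
    | monomial k c =>
        rw [Polynomial.aeval_monomial]
        exact (Algebra.commute_algebraMap_right c V).mul_right
          ((show Commute V _ from h8).pow_right k)
  obtain ⟨q, hq⟩ := exists_aeval_eq_sqrt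
    (Matrix.posSemidef_conjTranspose_mul_self (A * A.map (starRingEnd ℂ)))
  have hψ : ((Matrix.posSemidef_conjTranspose_mul_self
        (A * A.map (starRingEnd ℂ))).sqrt).map (algebraMap ℂ B)
      = Polynomial.aeval
          ((((A * A.map (starRingEnd ℂ))ᴴ * (A * A.map (starRingEnd ℂ)))).map (algebraMap ℂ B))
          q := by
    rw [← hq]
    have h := Polynomial.aeval_algHom_apply
      (AlgHom.mapMatrix (Algebra.ofId ℂ B) :
        Matrix (Fin m) (Fin m) ℂ →ₐ[ℂ] Matrix (Fin m) (Fin m) B)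
      ((A * A.map (starRingEnd ℂ))ᴴ * (A * A.map (starRingEnd ℂ))) q
    have hco : ⇑(Algebra.ofId ℂ B) = ⇑(algebraMap ℂ B) := funext fun r => Algebra.ofId_apply B r
    simp only [AlgHom.mapMatrix_apply, hco] at h
    exact h.symm
  rw [hψ]
  exact hcomm q
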